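/- For every perfect 2-coloring of the infinite path graph (ℤ with i ~ i±1), the coloring is equivalent (up to shift and color swap) to one of the periodic colorings with periods [12], [122], or [1122]. -/

import Mathlib

/-- Neighborhood of `i` in the infinite circulant graph `Ci_∞(D_n)`. -/
noncomputable def nbrs (n : ℕ) (i : ℤ) : Finset ℤ :=
  (Finset.Icc (i - (2*(n:ℤ) - 1)) (i + (2*(n:ℤ) - 1))).filter (fun j => Odd (j - i))

/-- `φ` is a perfect `k`-coloring of `Ci_∞(D_n)` with parameter matrix `M`. -/
def PerfectK (n k : ℕ) (φ : ℤ → Fin k) (M : Fin k → Fin k → ℕ) : Prop :=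
  ∀ i j, ((nbrs n i).filter (fun x => φ x = j)).card = M (φ i) j

lemma nbrs_one (i : ℤ) : nbrs 1 i = {i - 1, i + 1} := by
  ext j
  simp only [nbrs, Finset.mem_filter, Finset.mem_Icc, Finset.mem_insert, Finset.mem_singleton,
    Int.odd_iff]
  omega

lemma count_eq (φ : ℤ → Fin 2) (M : Fin 2 → Fin 2 → ℕ) (hφ : PerfectK 1 2 φ M) (i : ℤ)
    (j : Fin 2) :
    ((if φ i = j then 1 else 0) + (if φ (i+2) = j then 1 else 0) : ℕ) = M (φ (i+1)) j := by
  have h := hφ (i+1) j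
  rw [nbrs_one, show i+1-1 = i by ring, show i+1+1 = i+2 by ring] at h
  rw [← h]
  have hne : i ≠ i + 2 := by omega
  rw [Finset.filter_insert, Finset.filter_singleton]
  by_cases h1 : φ i = j <;> by_cases h2 : φ (i+2) = j <;>
    simp [h1, h2, Finset.card_insert_of_notMem, hne]

lemma fin2c (a : Fin 2) : a = 0 ∨ a = 1 := by revert a; decide
lemma fin2_ne (a b : Fin 2) (h : a ≠ b) : b = a + 1 := by revert a b; decide
lemma fin2_aa (a : Fin 2) : a + 1 + 1 = a := by revert a; decide

lemma mono (φ : ℤ → Fin 2) (c : Fin 2) (h : ∀ i, φ i = c → φ (i+1) = c ∧ φ (i-1) = c)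
    (t : ℤ) (ht : φ t = c) : ∀ k : ℤ, φ (t + k) = c := by
  intro k
  induction k using Int.induction_on with
  | zero => simpa using ht
  | succ n ih => have := (h _ ih).1; rwa [show t + n + 1 = t + (n+1) by ring] at this
  | pred n ih => have := (h _ ih).2; rwa [show t + (-n) - 1 = t + (-(n:ℤ)-1) by ring] at this

lemma alt2 (φ : ℤ → Fin 2) (h : ∀ i, φ (i+1) = φ i + 1) :
    ∀ k : ℤ, φ k = if k % 2 = 0 then φ 0 else φ 0 + 1 := by
  intro k
  induction k using Int.induction_on with
  | zero => simp
  | succ n ih =>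
      rw [h n, ih]
      rcases Int.emod_two_eq_zero_or_one n with h2 | h2 <;>
        simp [h2, show ((n:ℤ)+1) % 2 = (if (n:ℤ) % 2 = 0 then 1 else 0) by omega, fin2_aa]
  | pred n ih =>
      have := h (-(n:ℤ)-1)
      rw [show -(n:ℤ)-1+1 = -(n:ℤ) by ring] at this
      have e : φ (-(n:ℤ)-1) = φ (-(n:ℤ)) + 1 := by rw [this, fin2_aa]
      rw [e, ih]
      rcases Int.emod_two_eq_zero_or_one (-(n:ℤ)) with h2 | h2 <;>
        simp [h2, show (-(n:ℤ)-1) % 2 = (if (-(n:ℤ)) % 2 = 0 then 1 else 0) by omega, fin2_aa]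

lemma per4 (φ : ℤ → Fin 2) (h : ∀ i, φ (i+2) = φ i + 1) : ∀ k : ℤ, φ k = φ (k % 4) := by
  have q1 : ∀ i, φ (i + 4) = φ i := by
    intro i
    have := h (i+2)
    rw [show i+2+2 = i+4 by ring] at this
    rw [this, h i, fin2_aa]
  have q2 : ∀ k m : ℤ, φ (k + 4*m) = φ k := by
    intro k m
    induction m using Int.induction_on with
    | zero => simp
    | succ n ih =>
        have := q1 (k + 4*n)
        rw [show k+4*(n:ℤ)+4 = k + 4*((n:ℤ)+1) by ring] at this
        rw [this, ih]
    | pred n ih =>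
        have := q1 (k + 4*(-(n:ℤ)-1))
        rw [show k+4*(-(n:ℤ)-1)+4 = k + 4*(-(n:ℤ)) by ring] at this
        rw [← ih, ← this]
  intro k
  have := q2 (k % 4) (k / 4)
  rw [show k % 4 + 4 * (k/4) = k by omega] at this
  rw [← this]

lemma per3 (φ : ℤ → Fin 2) (c : Fin 2)
    (g01 : ∀ i, φ i = c → φ (i+1) = c + 1)
    (g01' : ∀ i, φ (i+1) = c → φ i = c + 1)
    (g1 : ∀ i, φ (i+1) = c + 1 → φ i ≠ φ (i+2))
    (t : ℤ) (ht : φ t = c) :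
    ∀ k : ℤ, φ (t + 3*k) = c ∧ φ (t + 3*k + 1) = c + 1 ∧ φ (t + 3*k + 2) = c + 1 := by
  intro k
  induction k using Int.induction_on with
  | zero =>
      have h1 : φ (t+1) = c + 1 := g01 t ht
      have h2 : φ (t+2) = c + 1 := by
        have := g1 t h1
        rw [ht] at this
        exact (fin2_ne _ _ this).symm ▸ rfl
      exact ⟨by simpa using ht, by simpa using h1, by simpa using h2⟩
  | succ n ih =>
      obtain ⟨e0, e1, e2⟩ := ih
      set m := t + 3*(n:ℤ) with hm
      have h3 : φ (m+3) = c := by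
        have := g1 (m+1) (by rwa [show m+1+1 = m+2 by ring])
        rw [e1] at this
        have := fin2_ne _ _ this
        rwa [fin2_aa, show m+1+2 = m+3 by ring] at this
      have h4 : φ (m+4) = c + 1 := by
        have := g01 (m+3) h3
        rwa [show m+3+1 = m+4 by ring] at this
      have h5 : φ (m+5) = c + 1 := by
        have := g1 (m+3) (by rwa [show m+3+1 = m+4 by ring])
        rw [h3] at this
        have := fin2_ne _ _ this
        rwa [show m+3+2 = m+5 by ring] at this
      refine ⟨?_, ?_, ?_⟩
      · rwa [show t + 3*((n:ℤ)+1) = m + 3 by rw [hm]; ring]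
      · rwa [show t + 3*((n:ℤ)+1) + 1 = m + 4 by rw [hm]; ring]
      · rwa [show t + 3*((n:ℤ)+1) + 2 = m + 5 by rw [hm]; ring]
  | pred n ih =>
      obtain ⟨e0, e1, e2⟩ := ih
      set m := t + 3*(-(n:ℤ)) with hm
      have h1 : φ (m-1) = c + 1 := by
        have := g01' (m-1)
        rw [show m-1+1 = m by ring] at this
        exact this e0
      have h2 : φ (m-2) = c + 1 := by
        have := g1 (m-2) (by rwa [show m-2+1 = m-1 by ring])
        rw [show m-2+2 = m by ring, e0] at this
        exact fin2_ne _ _ (Ne.symm this)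
      have h3 : φ (m-3) = c := by
        have := g1 (m-3) (by rwa [show m-3+1 = m-2 by ring])
        rw [show m-3+2 = m-1 by ring, h1] at this
        have h := fin2_ne _ _ (Ne.symm this)
        rwa [fin2_aa] at h
      refine ⟨?_, ?_, ?_⟩
      · rwa [show t + 3*(-(n:ℤ)-1) = m - 3 by rw [hm]; ring]
      · rwa [show t + 3*(-(n:ℤ)-1) + 1 = m - 2 by rw [hm]; ring]
      · rwa [show t + 3*(-(n:ℤ)-1) + 2 = m - 1 by rw [hm]; ring]

theorem path_perfect_two_colorings (φ : ℤ → Fin 2) (hsurj : Function.Surjective φ)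
    (M : Fin 2 → Fin 2 → ℕ) (hφ : PerfectK 1 2 φ M) :
    ∃ (s : ℤ) (σ : Fin 2 ≃ Fin 2),
      (∀ i : ℤ, σ (φ (i + s)) = if i % 2 = 0 then 0 else 1) ∨
      (∀ i : ℤ, σ (φ (i + s)) = if i % 3 = 0 then 0 else 1) ∨
      (∀ i : ℤ, σ (φ (i + s)) = if i % 4 = 0 ∨ i % 4 = 1 then 0 else 1) := by
  have hC := count_eq φ M hφ
  obtain ⟨i0, h0⟩ := hsurj 0
  obtain ⟨i1, h1⟩ := hsurj 1
  -- centered version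
  have hCc : ∀ i j, ((if φ (i-1) = j then 1 else 0) + (if φ (i+1) = j then 1 else 0) : ℕ)
      = M (φ i) j := by
    intro i j
    have := hC (i-1) j
    rwa [show i-1+1 = i by ring, show i-1+2 = i+1 by ring] at this
  -- row sums
  have hrow : ∀ i, M (φ i) 0 + M (φ i) 1 = 2 := by
    intro i
    have ha := hCc i 0
    have hb := hCc i 1
    rcases fin2c (φ (i-1)) with e|e <;> rcases fin2c (φ (i+1)) with f|f <;>
      simp [e, f] at ha hb <;> omega
  have hs0 : M 0 0 + M 0 1 = 2 := by have := hrow i0; rwa [h0] at this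
  have hs1 : M 1 0 + M 1 1 = 2 := by have := hrow i1; rwa [h1] at this
  -- no row has diagonal 2 (else monochromatic)
  have hne2 : ∀ c : Fin 2, M c c ≠ 2 ∨ ¬ ∃ t, φ t = c := by
    intro c
    by_cases hex : ∃ t, φ t = c
    · obtain ⟨t, ht⟩ := hex
      left
      intro hMc
      have hmon : ∀ i, φ i = c → φ (i+1) = c ∧ φ (i-1) = c := by
        intro i hi
        have h := hCc i c
        rw [hi, hMc] at h
        rcases fin2c (φ (i-1)) with e|e <;> rcases fin2c (φ (i+1)) with f|f <;>
          rcases fin2c c with g|g <;> simp [e, f, g] at h ⊢ <;> omega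
      have hall := mono φ c hmon t ht
      rcases fin2c c with g|g
      · have := hall (i1 - t); rw [show t + (i1 - t) = i1 by ring, h1, g] at this
        exact absurd this (by decide)
      · have := hall (i0 - t); rw [show t + (i0 - t) = i0 by ring, h0, g] at this
        exact absurd this (by decide)
    · right; exact hex
  have hd0 : M 0 0 ≠ 2 := by
    rcases hne2 0 with h | h
    · exact h
    · exact absurd ⟨i0, h0⟩ h
  have hd1 : M 1 1 ≠ 2 := by
    rcases hne2 1 with h | h
    · exact h
    · exact absurd ⟨i1, h1⟩ h
  have hb0 : M 0 0 = 0 ∨ M 0 0 = 1 := by omega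
  have hb1 : M 1 1 = 0 ∨ M 1 1 = 1 := by omega
  rcases hb0 with hm00 | hm00 <;> rcases hb1 with hm11 | hm11
  · -- M00 = 0, M11 = 0 : alternating [12]
    have halt : ∀ i, φ (i+1) = φ i + 1 := by
      intro i
      rcases fin2c (φ (i+1)) with e|e
      · have h := hC i 0
        rw [e, hm00] at h
        rcases fin2c (φ i) with f|f <;> rcases fin2c (φ (i+2)) with g|g <;>
          simp [f, g] at h <;> rw [e, f] <;> decide
      · have h := hC i 1
        rw [e, hm11] at h
        rcases fin2c (φ i) with f|f <;> rcases fin2c (φ (i+2)) with g|g <;>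
          simp [f, g] at h <;> rw [e, f] <;> decide
    have hk := alt2 φ halt
    rcases fin2c (φ 0) with a | a
    · refine ⟨0, Equiv.refl _, Or.inl ?_⟩
      intro i
      rw [add_zero, hk i, a]
      split <;> rfl
    · refine ⟨0, Equiv.swap 0 1, Or.inl ?_⟩
      intro i
      rw [add_zero, hk i, a]
      split <;> decide
  · -- M00 = 0, M11 = 1 : [122] with c = 0
    have hm10 : M 1 0 = 1 := by omega
    have g01 : ∀ i, φ i = (0:Fin 2) → φ (i+1) = 0 + 1 := by
      intro i hi
      rcases fin2c (φ (i+1)) with e|e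
      · have h := hC i 0
        rw [e, hm00, hi] at h
        rcases fin2c (φ (i+2)) with g|g <;> simp [g] at h
      · rw [e]; rfl
    have g01' : ∀ i, φ (i+1) = (0:Fin 2) → φ i = 0 + 1 := by
      intro i hi
      rcases fin2c (φ i) with e|e
      · have h := hC (i-1) 0
        rw [show i-1+1 = i by ring, show i-1+2 = i+1 by ring, e, hm00, hi] at h
        rcases fin2c (φ (i-1)) with g|g <;> simp [g] at h
      · rw [e]; rfl
    have g1 : ∀ i, φ (i+1) = (0:Fin 2) + 1 → φ i ≠ φ (i+2) := by
      intro i hi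
      have h := hC i 0
      rw [show (0:Fin 2)+1 = 1 from rfl] at hi
      rw [hi, hm10] at h
      rcases fin2c (φ i) with f|f <;> rcases fin2c (φ (i+2)) with g|g <;>
        simp [f, g] at h ⊢ <;> try (rw [f, g]; decide)
    have Q := per3 φ 0 g01 g01' g1 i0 h0
    refine ⟨i0, Equiv.refl _, Or.inr (Or.inl ?_)⟩
    intro i
    have hi : i = 3*(i/3) + i % 3 := by omega
    have hr : i % 3 = 0 ∨ i % 3 = 1 ∨ i % 3 = 2 := by omega
    obtain ⟨q0, q1, q2⟩ := Q (i/3)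
    rcases hr with hr | hr | hr
    · rw [show i + i0 = i0 + 3*(i/3) by omega, q0]; simp [hr]
    · rw [show i + i0 = i0 + 3*(i/3) + 1 by omega, q1]
      simp [hr] <;> decide
    · rw [show i + i0 = i0 + 3*(i/3) + 2 by omega, q2]
      simp [hr] <;> decide
  · -- M00 = 1, M11 = 0 : [122] with c = 1, swapped colors
    have hm01 : M 0 1 = 1 := by omega
    have g01 : ∀ i, φ i = (1:Fin 2) → φ (i+1) = 1 + 1 := by
      intro i hi
      rcases fin2c (φ (i+1)) with e|e
      · rw [e]; rfl
      · have h := hC i 1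
        rw [e, hm11, hi] at h
        rcases fin2c (φ (i+2)) with g|g <;> simp [g] at h
    have g01' : ∀ i, φ (i+1) = (1:Fin 2) → φ i = 1 + 1 := by
      intro i hi
      rcases fin2c (φ i) with e|e
      · rw [e]; rfl
      · have h := hC (i-1) 1
        rw [show i-1+1 = i by ring, show i-1+2 = i+1 by ring, e, hm11, hi] at h
        rcases fin2c (φ (i-1)) with g|g <;> simp [g] at h
    have g1 : ∀ i, φ (i+1) = (1:Fin 2) + 1 → φ i ≠ φ (i+2) := by
      intro i hi
      have h := hC i 1
      rw [show (1:Fin 2)+1 = 0 from rfl] at hi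
      rw [hi, hm01] at h
      rcases fin2c (φ i) with f|f <;> rcases fin2c (φ (i+2)) with g|g <;>
        simp [f, g] at h ⊢ <;> try (rw [f, g]; decide)
    have Q := per3 φ 1 g01 g01' g1 i1 h1
    refine ⟨i1, Equiv.swap 0 1, Or.inr (Or.inl ?_)⟩
    intro i
    have hi : i = 3*(i/3) + i % 3 := by omega
    have hr : i % 3 = 0 ∨ i % 3 = 1 ∨ i % 3 = 2 := by omega
    obtain ⟨q0, q1, q2⟩ := Q (i/3)
    rcases hr with hr | hr | hr
    · rw [show i + i1 = i1 + 3*(i/3) by omega, q0]; simp [hr] <;> decide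
    · rw [show i + i1 = i1 + 3*(i/3) + 1 by omega, q1]
      simp [hr] <;> decide
    · rw [show i + i1 = i1 + 3*(i/3) + 2 by omega, q2]
      simp [hr] <;> decide
  · -- M00 = 1, M11 = 1 : [1122]
    have hm10 : M 1 0 = 1 := by omega
    have h2 : ∀ i, φ (i+2) = φ i + 1 := by
      intro i
      have h := hC i 0
      have hM : M (φ (i+1)) 0 = 1 := by
        rcases fin2c (φ (i+1)) with e|e <;> rw [e] <;> assumption
      rw [hM] at h
      rcases fin2c (φ i) with f|f <;> rcases fin2c (φ (i+2)) with g|g <;>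
        simp [f, g] at h <;> rw [f, g] <;> decide
    have hper := per4 φ h2
    have e2 : φ 2 = φ 0 + 1 := by have := h2 0; norm_num at this; exact this
    have e3 : φ 3 = φ 1 + 1 := by have := h2 1; norm_num at this; exact this
    have hval : ∀ i : ℤ, φ (i % 4) = φ (i % 4) := fun _ => rfl
    rcases fin2c (φ 0) with a | a <;> rcases fin2c (φ 1) with b | b
    · -- pattern 0011, s = 0
      refine ⟨0, Equiv.refl _, Or.inr (Or.inr ?_)⟩
      intro i
      rw [add_zero, Equiv.refl_apply, hper i]
      have hm : i % 4 = 0 ∨ i % 4 = 1 ∨ i % 4 = 2 ∨ i % 4 = 3 := by omega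
      rcases hm with hm | hm | hm | hm <;> rw [hm] <;> simp [hm, a, b, e2, e3] <;> decide
    · -- φ0=0, φ1=1 : pattern 0110, s = 3
      refine ⟨3, Equiv.refl _, Or.inr (Or.inr ?_)⟩
      intro i
      rw [Equiv.refl_apply, hper (i+3)]
      have hm : i % 4 = 0 ∨ i % 4 = 1 ∨ i % 4 = 2 ∨ i % 4 = 3 := by omega
      rcases hm with hm | hm | hm | hm <;>
        rw [show (i+3) % 4 = (if i % 4 = 0 then 3 else if i % 4 = 1 then 0 else if i % 4 = 2 then 1 else 2) by omega] <;>
        simp [hm, a, b, e2, e3] <;> decide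
    · -- φ0=1, φ1=0 : pattern 1001, s = 1
      refine ⟨1, Equiv.refl _, Or.inr (Or.inr ?_)⟩
      intro i
      rw [Equiv.refl_apply, hper (i+1)]
      have hm : i % 4 = 0 ∨ i % 4 = 1 ∨ i % 4 = 2 ∨ i % 4 = 3 := by omega
      rcases hm with hm | hm | hm | hm <;>
        rw [show (i+1) % 4 = (if i % 4 = 0 then 1 else if i % 4 = 1 then 2 else if i % 4 = 2 then 3 else 0) by omega] <;>
        simp [hm, a, b, e2, e3] <;> decide
    · -- φ0=1, φ1=1 : pattern 1100, s = 2
      refine ⟨2, Equiv.refl _, Or.inr (Or.inr ?_)⟩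
      intro i
      rw [Equiv.refl_apply, hper (i+2)]
      have hm : i % 4 = 0 ∨ i % 4 = 1 ∨ i % 4 = 2 ∨ i % 4 = 3 := by omega
      rcases hm with hm | hm | hm | hm <;>
        rw [show (i+2) % 4 = (if i % 4 = 0 then 2 else if i % 4 = 1 then 3 else if i % 4 = 2 then 0 else 1) by omega] <;>
        simp [hm, a, b, e2, e3] <;> decide
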